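/- Let (C,χ) be a Hopf heap with Grunspan map ϑ. Then for all a,b,c,d ∈ C: Σ τ_{a₂}^{[ϑ(a₁),b,c]} = ε(a)τ_b^c, Σ τ_{a₂}^{ϑ(a₁)} = ε(a)·id, and τ_c^d ∘ τ_a^{ϑ(b)} = τ_{[c,b,a]}^d, where τ_a^b(c) = [c,a,b]. -/

import Mathlib

open Coalgebra TensorProduct

universe u v w

/-- The older Mathlib `Coalgebra.Repr` (index type bundled as a field), at index universe `v`. -/
structure CoalgebraRepr (R : Type u) {A : Type v}
    [CommSemiring R] [AddCommMonoid A] [Module R A] [CoalgebraStruct R A] (a : A) where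
  {ι : Type v}
  index : Finset ι
  left : ι → A
  right : ι → A
  eq : ∑ i ∈ index, left i ⊗ₜ[R] right i = CoalgebraStruct.comul a

/-- A Hopf heap: a coalgebra `C` together with a coalgebra map
`χ : C ⊗ C^co ⊗ C → C` (given here as a trilinear map) satisfying the heap axioms. -/
structure HopfHeap (F : Type u) (C : Type v) [Field F] [AddCommGroup C] [Module F C]
    [Coalgebra F C] where
  χ : C →ₗ[F] C →ₗ[F] C →ₗ[F] C
  counit_χ : ∀ a b c : C,
    counit (R := F) (χ a b c) = counit (R := F) a * counit (R := F) b * counit (R := F) c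
  comul_χ : ∀ (a b c : C) (ra : CoalgebraRepr F a) (rb : CoalgebraRepr F b)
      (rc : CoalgebraRepr F c),
    comul (R := F) (χ a b c) =
      ∑ i ∈ ra.index, ∑ j ∈ rb.index, ∑ k ∈ rc.index,
        χ (ra.left i) (rb.right j) (rc.left k) ⊗ₜ[F] χ (ra.right i) (rb.left j) (rc.right k)
  assoc : ∀ a b c d e : C, χ (χ a b c) d e = χ a b (χ c d e)
  heap_left : ∀ (c a : C) (rc : CoalgebraRepr F c),
    ∑ i ∈ rc.index, χ (rc.left i) (rc.right i) a = counit (R := F) c • a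
  heap_right : ∀ (c a : C) (rc : CoalgebraRepr F c),
    ∑ i ∈ rc.index, χ a (rc.left i) (rc.right i) = counit (R := F) c • a

variable {F : Type u} {C : Type v} [Field F] [AddCommGroup C] [Module F C] [Coalgebra F C]

/-- `θ` is a Grunspan map for the Hopf heap `hh`: a coalgebra endomorphism satisfying
`[[a,b,θ c],d,e] = [a,[d,c,b],e]`. -/
def HopfHeap.IsGrunspan (hh : HopfHeap F C) (θ : C →ₗ[F] C) : Prop :=
  (∀ c : C, counit (R := F) (θ c) = counit (R := F) c) ∧
  (∀ (c : C) (rc : CoalgebraRepr F c),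
    comul (R := F) (θ c) = ∑ i ∈ rc.index, θ (rc.left i) ⊗ₜ[F] θ (rc.right i)) ∧
  (∀ a b c d e : C, hh.χ (hh.χ a b (θ c)) d e = hh.χ a (hh.χ d c b) e)

/-- The right `(a,b)`-translation `τ_a^b : c ↦ [c,a,b]`. -/
def HopfHeap.tau (hh : HopfHeap F C) (a b : C) : C →ₗ[F] C where
  toFun c := hh.χ c a b
  map_add' x y := by simp
  map_smul' r x := by simp


@[simp] lemma HopfHeap.tau_apply (hh : HopfHeap F C) (a b x : C) :
    hh.tau a b x = hh.χ x a b := rfl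

lemma HopfHeap.key (hh : HopfHeap F C) (θ : C →ₗ[F] C) (hθ : hh.IsGrunspan θ)
    (a : C) (ra : CoalgebraRepr F a) (x b c : C) :
    ∑ i ∈ ra.index, hh.χ (hh.χ x (ra.right i) (θ (ra.left i))) b c
      = counit (R := F) a • hh.χ x b c := by
  calc ∑ i ∈ ra.index, hh.χ (hh.χ x (ra.right i) (θ (ra.left i))) b c
      = ∑ i ∈ ra.index, hh.χ x (hh.χ b (ra.left i) (ra.right i)) c := by
        simp only [hθ.2.2]
    _ = hh.χ x (∑ i ∈ ra.index, hh.χ b (ra.left i) (ra.right i)) c := by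
        rw [map_sum, LinearMap.sum_apply]
    _ = counit (R := F) a • hh.χ x b c := by
        rw [hh.heap_right a b ra, map_smul, LinearMap.smul_apply]

lemma eq_zero_of_counit_zero (h : ∀ z : C, counit (R := F) z = 0) (x : C) : x = 0 := by
  have r := Coalgebra.Repr.arbitrary F x
  have hx := Coalgebra.sum_counit_tmul_eq (R := F) r
  apply_fun (TensorProduct.lid F C) at hx
  simpa [h] using hx.symm

/-- Translation identities involving the Grunspan map:
`Σ τ_{a₂}^{[ϑ(a₁),b,c]} = ε(a)τ_b^c`, `Σ τ_{a₂}^{ϑ(a₁)} = ε(a)·id` and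
`τ_c^d ∘ τ_a^{ϑ(b)} = τ_{[c,b,a]}^d`. -/
theorem tau_grunspan (hh : HopfHeap F C) (θ : C →ₗ[F] C) (hθ : hh.IsGrunspan θ)
    (a b c d : C) (ra : CoalgebraRepr F a) :
    (∑ i ∈ ra.index, hh.tau (ra.right i) (hh.χ (θ (ra.left i)) b c)
        = counit (R := F) a • hh.tau b c) ∧
    (∑ i ∈ ra.index, hh.tau (ra.right i) (θ (ra.left i))
        = counit (R := F) a • (LinearMap.id : C →ₗ[F] C)) ∧
    hh.tau c d ∘ₗ hh.tau a (θ b) = hh.tau (hh.χ c b a) d := by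
  refine ⟨?_, ?_, ?_⟩
  · ext x
    simp only [LinearMap.sum_apply, HopfHeap.tau_apply, LinearMap.smul_apply, ← hh.assoc]
    exact hh.key θ hθ a ra x b c
  · ext x
    simp only [LinearMap.sum_apply, HopfHeap.tau_apply, LinearMap.smul_apply,
      LinearMap.id_coe, id_eq]
    by_cases hz : ∀ z : C, counit (R := F) z = 0
    · simp [eq_zero_of_counit_zero hz x, hz a]
    · push_neg at hz
      obtain ⟨z, hz⟩ := hz
      set rz : CoalgebraRepr F z := ⟨(Coalgebra.Repr.arbitrary F z).index, (Coalgebra.Repr.arbitrary F z).left,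
          (Coalgebra.Repr.arbitrary F z).right, (Coalgebra.Repr.arbitrary F z).eq⟩ with hrz
      apply smul_right_injective C hz
      calc counit (R := F) z • ∑ i ∈ ra.index, hh.χ x (ra.right i) (θ (ra.left i))
          = ∑ i ∈ ra.index, counit (R := F) z • hh.χ x (ra.right i) (θ (ra.left i)) := by
            rw [Finset.smul_sum]
        _ = ∑ i ∈ ra.index, ∑ j ∈ rz.index,
              hh.χ (hh.χ x (ra.right i) (θ (ra.left i))) (rz.left j) (rz.right j) := by
            refine Finset.sum_congr rfl fun i _ => ?_
            rw [hh.heap_right z _ rz]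
        _ = ∑ j ∈ rz.index, ∑ i ∈ ra.index,
              hh.χ (hh.χ x (ra.right i) (θ (ra.left i))) (rz.left j) (rz.right j) := by
            rw [Finset.sum_comm]
        _ = ∑ j ∈ rz.index, counit (R := F) a • hh.χ x (rz.left j) (rz.right j) := by
            refine Finset.sum_congr rfl fun j _ => ?_
            exact hh.key θ hθ a ra x (rz.left j) (rz.right j)
        _ = counit (R := F) a • ∑ j ∈ rz.index, hh.χ x (rz.left j) (rz.right j) := by
            rw [Finset.smul_sum]
        _ = counit (R := F) z • counit (R := F) a • x := by
            rw [hh.heap_right z x rz, smul_comm]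
  · ext x
    simp only [LinearMap.comp_apply, HopfHeap.tau_apply]
    exact hθ.2.2 x a b c d
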